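/- Let (X,d) be a metric space and μ a Borel measure on X that is positive and finite on every open ball; fix x₀ ∈ X and write B_ρ := B(x₀,ρ). Let 1 < p < s̄ and let 0 < τ < s̄(p−1)/(s̄−p). Let 0 < R₁ ≤ 1 and assume there are constants C₁, C₂ > 0 and an exponent ℓ > 0 such that C₁·ρ^{s̄} ≤ μ(B_ρ) ≤ C₂·ρ^{ℓ} for all 0 < ρ ≤ R₁. Then the function x ↦ ( ∫_{d(x,x₀)}^{R₁} (ρ/μ(B_ρ))^{1/(p−1)} dρ )^{τ} is μ-integrable over the ball B(x₀,R₁), i.e. ∫_{B(x₀,R₁)} ( ∫_{d(x,x₀)}^{R₁} (ρ/μ(B_ρ))^{1/(p−1)} dρ )^{τ} dμ(x) < ∞. -/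

import Mathlib

open MeasureTheory Metric
open scoped ENNReal

private lemma ennreal_rpow_antitone {x y : ℝ≥0∞} (h : x ≤ y) {e : ℝ} (he : e ≤ 0) :
    y ^ e ≤ x ^ e := by
  calc y ^ e = (y ^ (-e))⁻¹ := by rw [← ENNReal.rpow_neg, neg_neg]
    _ ≤ (x ^ (-e))⁻¹ :=
        ENNReal.inv_le_inv.2 (ENNReal.rpow_le_rpow h (by linarith : (0:ℝ) ≤ -e))
    _ = x ^ e := by rw [← ENNReal.rpow_neg, neg_neg]

private lemma ennreal_alg1 (a b : ℝ≥0∞) (hb0 : b ≠ 0) (hbt : b ≠ ⊤) (x y : ℝ) (hy : 0 ≤ y) :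
    b ^ x * (a / b) ^ y = a ^ y * b ^ (x - y) := by
  rw [ENNReal.div_rpow_of_nonneg _ _ hy, div_eq_mul_inv, ← ENNReal.rpow_neg,
    show x - y = x + (-y) by ring, ENNReal.rpow_add _ _ hb0 hbt]
  ring

private lemma lint_Ioc_rpow_fin {a b : ℝ} (hb : -1 < b) :
    ∫⁻ t in Set.Ioc (0:ℝ) a, ENNReal.ofReal (t ^ b) < ⊤ := by
  have hint : IntegrableOn (fun t : ℝ => t ^ b) (Set.Ioc 0 a) volume :=
    (intervalIntegral.intervalIntegrable_rpow' hb (a := 0) (b := a)).1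
  have hnn : 0 ≤ᵐ[volume.restrict (Set.Ioc (0:ℝ) a)] fun t : ℝ => t ^ b := by
    filter_upwards [ae_restrict_mem measurableSet_Ioc] with t ht
    exact Real.rpow_nonneg ht.1.le b
  exact (hasFiniteIntegral_iff_ofReal hnn).1 hint.hasFiniteIntegral

private lemma lint_Ioi_rpow_fin {b : ℝ} (hb : b < -1) :
    ∫⁻ t in Set.Ioi (1:ℝ), ENNReal.ofReal (t ^ b) < ⊤ := by
  have hint : IntegrableOn (fun t : ℝ => t ^ b) (Set.Ioi 1) volume :=
    integrableOn_Ioi_rpow_of_lt hb one_pos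
  have hnn : 0 ≤ᵐ[volume.restrict (Set.Ioi (1:ℝ))] fun t : ℝ => t ^ b := by
    filter_upwards [ae_restrict_mem measurableSet_Ioi] with t ht
    exact Real.rpow_nonneg (by linarith [Set.mem_Ioi.1 ht]) b
  exact (hasFiniteIntegral_iff_ofReal hnn).1 hint.hasFiniteIntegral

private lemma main_aux
    {X : Type*} [MetricSpace X] [MeasurableSpace X] [BorelSpace X]
    (μ : Measure X) (x₀ : X)
    (hpos : ∀ r : ℝ, 0 < r → 0 < μ (ball x₀ r))
    (hfin : ∀ r : ℝ, μ (ball x₀ r) < ⊤)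
    (s τ q κ R₁ C₁ : ℝ)
    (hq : 0 < q) (hκ : 0 < κ) (hτ : 0 < τ) (hτκ : τ < κ)
    (hqse : -1 < q + s * (1/κ - q))
    (hR₁ : 0 < R₁) (hR₁' : R₁ ≤ 1) (hC₁ : 0 < C₁)
    (hlow : ∀ ρ : ℝ, 0 < ρ → ρ ≤ R₁ → ENNReal.ofReal (C₁ * ρ ^ s) ≤ μ (ball x₀ ρ))
    (hx₀ : μ {x₀} = 0)
    (g : ℝ → ℝ≥0∞)
    (hg : ∀ r, g r = ∫⁻ ρ in Set.Ioc r R₁, (ENNReal.ofReal ρ / μ (ball x₀ ρ)) ^ q) :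
    (∫⁻ x in ball x₀ R₁, (g (dist x x₀)) ^ τ ∂μ) < ⊤ := by
  -- basic monotonicity facts
  have hg_anti : Antitone g := fun a b hab => by
    rw [hg, hg]; exact lintegral_mono_set (Set.Ioc_subset_Ioc_left hab)
  have hgR₁ : g R₁ = 0 := by rw [hg, Set.Ioc_self]; simp
  -- splitting estimate
  have hsplit : ∀ r₀ r r' : ℝ, 0 < r₀ → r₀ ≤ r → r ≤ r' → r' ≤ R₁ →
      g r ≤ g r' + (ENNReal.ofReal R₁ / μ (ball x₀ r₀)) ^ q * ENNReal.ofReal (r' - r) := by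
    intro r₀ r r' h0 h1 h2 h3
    rw [hg r, hg r']
    have hU : Set.Ioc r R₁ = Set.Ioc r r' ∪ Set.Ioc r' R₁ :=
      (Set.Ioc_union_Ioc_eq_Ioc h2 h3).symm
    rw [hU, lintegral_union measurableSet_Ioc (Set.Ioc_disjoint_Ioc_of_le le_rfl)]
    rw [add_comm]
    refine add_le_add_right ?_ _
    calc ∫⁻ ρ in Set.Ioc r r', (ENNReal.ofReal ρ / μ (ball x₀ ρ)) ^ q
        ≤ ∫⁻ _ρ in Set.Ioc r r', (ENNReal.ofReal R₁ / μ (ball x₀ r₀)) ^ q := by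
          refine setLIntegral_mono' measurableSet_Ioc fun ρ hρ => ?_
          refine ENNReal.rpow_le_rpow ?_ hq.le
          exact ENNReal.div_le_div (ENNReal.ofReal_le_ofReal (le_trans hρ.2 h3))
            (measure_mono (ball_subset_ball (le_trans h1 hρ.1.le)))
      _ = (ENNReal.ofReal R₁ / μ (ball x₀ r₀)) ^ q * ENNReal.ofReal (r' - r) := by
          rw [setLIntegral_const, Real.volume_Ioc]
  -- finiteness of g
  have hgfin : ∀ r : ℝ, 0 < r → g r ≠ ⊤ := by
    intro r hr
    rcases le_or_gt r R₁ with h | h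
    · have := hsplit r r R₁ hr le_rfl h le_rfl
      rw [hgR₁, zero_add] at this
      refine ne_top_of_le_ne_top ?_ this
      refine (ENNReal.mul_lt_top ?_ ENNReal.ofReal_lt_top).ne
      exact ENNReal.rpow_lt_top_of_nonneg hq.le
        (ENNReal.div_lt_top ENNReal.ofReal_ne_top (hpos r hr).ne').ne
    · rw [hg, Set.Ioc_eq_empty (by linarith)]
      simp
  -- the key comparison integral
  set CA := ∫⁻ ρ in Set.Ioc (0:ℝ) R₁,
      (ENNReal.ofReal ρ) ^ q * (μ (ball x₀ ρ)) ^ (1/κ - q) with hCAdef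
  have hCAfin : CA < ⊤ := by
    rcases le_or_gt 0 (1/κ - q) with he | he
    · have hb : ∀ ρ ∈ Set.Ioc (0:ℝ) R₁,
          (ENNReal.ofReal ρ) ^ q * (μ (ball x₀ ρ)) ^ (1/κ - q)
            ≤ (μ (ball x₀ R₁)) ^ (1/κ - q) := by
        intro ρ hρ
        have h1 : (ENNReal.ofReal ρ) ^ q ≤ 1 := by
          have hle : ENNReal.ofReal ρ ≤ 1 := by
            rw [← ENNReal.ofReal_one]
            exact ENNReal.ofReal_le_ofReal (le_trans hρ.2 hR₁')
          calc (ENNReal.ofReal ρ) ^ q ≤ (1:ℝ≥0∞) ^ q := ENNReal.rpow_le_rpow hle hq.le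
            _ = 1 := ENNReal.one_rpow q
        have h2 : (μ (ball x₀ ρ)) ^ (1/κ - q) ≤ (μ (ball x₀ R₁)) ^ (1/κ - q) :=
          ENNReal.rpow_le_rpow (measure_mono (ball_subset_ball hρ.2)) he
        calc (ENNReal.ofReal ρ) ^ q * (μ (ball x₀ ρ)) ^ (1/κ - q)
            ≤ 1 * (μ (ball x₀ R₁)) ^ (1/κ - q) := mul_le_mul' h1 h2
          _ = (μ (ball x₀ R₁)) ^ (1/κ - q) := one_mul _
      calc CA ≤ ∫⁻ _ρ in Set.Ioc (0:ℝ) R₁, (μ (ball x₀ R₁)) ^ (1/κ - q) :=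
            setLIntegral_mono' measurableSet_Ioc hb
        _ = (μ (ball x₀ R₁)) ^ (1/κ - q) * volume (Set.Ioc (0:ℝ) R₁) :=
            setLIntegral_const _ _
        _ < ⊤ := by
            refine ENNReal.mul_lt_top
              (ENNReal.rpow_lt_top_of_nonneg he (hfin R₁).ne) ?_
            rw [Real.volume_Ioc]
            exact ENNReal.ofReal_lt_top
    · have hb : ∀ ρ ∈ Set.Ioc (0:ℝ) R₁,
          (ENNReal.ofReal ρ) ^ q * (μ (ball x₀ ρ)) ^ (1/κ - q)
            ≤ ENNReal.ofReal (C₁ ^ (1/κ - q)) *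
                ENNReal.ofReal (ρ ^ (q + s * (1/κ - q))) := by
        intro ρ hρ
        have hρ0 : (0:ℝ) < ρ := hρ.1
        have h1 : (μ (ball x₀ ρ)) ^ (1/κ - q)
            ≤ (ENNReal.ofReal (C₁ * ρ ^ s)) ^ (1/κ - q) :=
          ennreal_rpow_antitone (hlow ρ hρ0 hρ.2) he.le
        have h2 : (ENNReal.ofReal ρ) ^ q * (ENNReal.ofReal (C₁ * ρ ^ s)) ^ (1/κ - q)
            = ENNReal.ofReal (C₁ ^ (1/κ - q)) *
                ENNReal.ofReal (ρ ^ (q + s * (1/κ - q))) := by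
          have hreal : ρ ^ q * (C₁ * ρ ^ s) ^ (1/κ - q)
              = C₁ ^ (1/κ - q) * ρ ^ (q + s * (1/κ - q)) := by
            rw [Real.mul_rpow hC₁.le (by positivity), ← Real.rpow_mul hρ0.le,
              Real.rpow_add hρ0]
            ring
          calc (ENNReal.ofReal ρ) ^ q * (ENNReal.ofReal (C₁ * ρ ^ s)) ^ (1/κ - q)
              = ENNReal.ofReal (ρ ^ q * (C₁ * ρ ^ s) ^ (1/κ - q)) := by
                rw [ENNReal.ofReal_rpow_of_pos hρ0,
                  ENNReal.ofReal_rpow_of_pos (show (0:ℝ) < C₁ * ρ ^ s by positivity),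
                  ← ENNReal.ofReal_mul (by positivity)]
            _ = ENNReal.ofReal (C₁ ^ (1/κ - q) * ρ ^ (q + s * (1/κ - q))) := by rw [hreal]
            _ = ENNReal.ofReal (C₁ ^ (1/κ - q)) *
                ENNReal.ofReal (ρ ^ (q + s * (1/κ - q))) :=
                ENNReal.ofReal_mul (by positivity)
        calc (ENNReal.ofReal ρ) ^ q * (μ (ball x₀ ρ)) ^ (1/κ - q)
            ≤ (ENNReal.ofReal ρ) ^ q * (ENNReal.ofReal (C₁ * ρ ^ s)) ^ (1/κ - q) :=
              mul_le_mul_right h1 _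
          _ = _ := h2
      calc CA ≤ ∫⁻ ρ in Set.Ioc (0:ℝ) R₁,
            ENNReal.ofReal (C₁ ^ (1/κ - q)) * ENNReal.ofReal (ρ ^ (q + s * (1/κ - q))) :=
            setLIntegral_mono' measurableSet_Ioc hb
        _ = ENNReal.ofReal (C₁ ^ (1/κ - q)) *
            ∫⁻ ρ in Set.Ioc (0:ℝ) R₁, ENNReal.ofReal (ρ ^ (q + s * (1/κ - q))) :=
            lintegral_const_mul' _ _ ENNReal.ofReal_ne_top
        _ < ⊤ := ENNReal.mul_lt_top ENNReal.ofReal_lt_top (lint_Ioc_rpow_fin hqse)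
  -- Lemma A
  have lemA : ∀ r, r ∈ Set.Ioc (0:ℝ) R₁ → (μ (ball x₀ r)) ^ (1/κ) * g r ≤ CA := by
    intro r hr
    rw [hg]
    rw [← lintegral_const_mul' _ _
      (ENNReal.rpow_lt_top_of_nonneg (by positivity) (hfin r).ne).ne]
    calc ∫⁻ ρ in Set.Ioc r R₁,
          (μ (ball x₀ r)) ^ (1/κ) * (ENNReal.ofReal ρ / μ (ball x₀ ρ)) ^ q
        ≤ ∫⁻ ρ in Set.Ioc r R₁, (ENNReal.ofReal ρ) ^ q * (μ (ball x₀ ρ)) ^ (1/κ - q) := by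
          refine setLIntegral_mono' measurableSet_Ioc fun ρ hρ => ?_
          have hρ0 : (0:ℝ) < ρ := lt_trans hr.1 hρ.1
          calc (μ (ball x₀ r)) ^ (1/κ) * (ENNReal.ofReal ρ / μ (ball x₀ ρ)) ^ q
              ≤ (μ (ball x₀ ρ)) ^ (1/κ) * (ENNReal.ofReal ρ / μ (ball x₀ ρ)) ^ q :=
                mul_le_mul_left
                  (ENNReal.rpow_le_rpow (measure_mono (ball_subset_ball hρ.1.le))
                    (by positivity)) _
            _ = (ENNReal.ofReal ρ) ^ q * (μ (ball x₀ ρ)) ^ (1/κ - q) :=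
                ennreal_alg1 _ _ (hpos ρ hρ0).ne' (hfin ρ).ne _ _ hq.le
      _ ≤ CA := lintegral_mono_set (Set.Ioc_subset_Ioc_left hr.1.le)
  -- distribution estimate
  have hdist : ∀ t : ℝ, 0 < t →
      μ {x | x ∈ ball x₀ R₁ ∧ ENNReal.ofReal t < g (dist x x₀)}
        ≤ CA ^ κ * (ENNReal.ofReal (t/4)) ^ (-κ) := by
    intro t ht
    set T := {r : ℝ | r ∈ Set.Ioc (0:ℝ) R₁ ∧ ENNReal.ofReal (t/2) ≤ g r} with hTdef
    have hTdown : ∀ r ∈ T, ∀ r' : ℝ, 0 < r' → r' ≤ r → r' ∈ T := by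
      intro r hr r' h0 hle
      exact ⟨⟨h0, le_trans hle hr.1.2⟩, le_trans hr.2 (hg_anti hle)⟩
    rcases Set.eq_empty_or_nonempty T with hT | ⟨r₁, hr₁⟩
    · have hsub : {x | x ∈ ball x₀ R₁ ∧ ENNReal.ofReal t < g (dist x x₀)} ⊆ {x₀} := by
        intro x hx
        by_contra hxx
        have hd : 0 < dist x x₀ := dist_pos.2 hxx
        have hdR : dist x x₀ < R₁ := mem_ball.1 hx.1
        have hmem : dist x x₀ ∈ T :=
          ⟨⟨hd, hdR.le⟩, le_trans (ENNReal.ofReal_le_ofReal (by linarith)) hx.2.le⟩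
        rw [hT] at hmem
        exact hmem
      calc μ {x | x ∈ ball x₀ R₁ ∧ ENNReal.ofReal t < g (dist x x₀)}
          ≤ μ {x₀} := measure_mono hsub
        _ = 0 := hx₀
        _ ≤ _ := zero_le
    · have hr₁0 : 0 < r₁ := hr₁.1.1
      have hr₁R : r₁ ≤ R₁ := hr₁.1.2
      have ht2 : (0:ℝ≥0∞) < ENNReal.ofReal (t/2) := ENNReal.ofReal_pos.2 (by linarith)
      set H : ℝ≥0∞ := (ENNReal.ofReal R₁ / μ (ball x₀ r₁)) ^ q with hHdef
      have hHfin : H ≠ ⊤ :=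
        (ENNReal.rpow_lt_top_of_nonneg hq.le
          (ENNReal.div_lt_top ENNReal.ofReal_ne_top (hpos r₁ hr₁0).ne').ne).ne
      set Ht : ℝ := H.toReal + 1 with hHtdef
      have hHt : 0 < Ht := by
        rw [hHtdef]; positivity
      have hHle : H ≤ ENNReal.ofReal Ht := by
        conv_lhs => rw [← ENNReal.ofReal_toReal hHfin]
        exact ENNReal.ofReal_le_ofReal (by rw [hHtdef]; linarith)
      have hkey : ∀ r r' : ℝ, r₁ ≤ r → r ≤ r' → r' ≤ R₁ →
          g r ≤ g r' + ENNReal.ofReal ((r' - r) * Ht) := by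
        intro r r' h1 h2 h3
        refine le_trans (hsplit r₁ r r' hr₁0 h1 h2 h3) ?_
        refine add_le_add_right ?_ _
        calc H * ENNReal.ofReal (r' - r) ≤ ENNReal.ofReal Ht * ENNReal.ofReal (r' - r) :=
              mul_le_mul_left hHle _
          _ = ENNReal.ofReal ((r' - r) * Ht) := by
              rw [← ENNReal.ofReal_mul hHt.le, mul_comm]
      have hbddT : BddAbove T := ⟨R₁, fun r hr => hr.1.2⟩
      have hrs₁ : r₁ ≤ sSup T := le_csSup hbddT hr₁
      have hrs0 : 0 < sSup T := lt_of_lt_of_le hr₁0 hrs₁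
      have hrsR : sSup T ≤ R₁ := csSup_le ⟨r₁, hr₁⟩ fun r hr => hr.1.2
      have hrsR' : sSup T < R₁ := by
        set ε : ℝ := min ((R₁ - r₁)/2) (t / (4 * Ht)) with hεdef
        have hr₁R' : r₁ < R₁ := by
          rcases lt_or_eq_of_le hr₁R with hlt | heq
          · exact hlt
          · exfalso
            have h2 := hr₁.2
            rw [heq, hgR₁] at h2
            exact (not_le.2 ht2) h2
        have hε : 0 < ε := lt_min (by linarith) (by positivity)
        have hεle1 : ε ≤ (R₁ - r₁)/2 := min_le_left _ _
        have hεle2 : ε ≤ t / (4 * Ht) := min_le_right _ _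
        have hnotin : R₁ - ε ∉ T := by
          intro hmem
          have h4 : g (R₁ - ε) ≤ g R₁ + ENNReal.ofReal ((R₁ - (R₁ - ε)) * Ht) :=
            hkey (R₁ - ε) R₁ (by linarith) (by linarith) le_rfl
          have hsimp : R₁ - (R₁ - ε) = ε := by ring
          rw [hgR₁, zero_add, hsimp] at h4
          have h5 : ENNReal.ofReal (t/2) ≤ ENNReal.ofReal (ε * Ht) :=
            le_trans hmem.2 h4
          have h6 : t/2 ≤ ε * Ht := (ENNReal.ofReal_le_ofReal_iff (by positivity)).1 h5
          have h9 : ε * Ht ≤ (t / (4 * Ht)) * Ht := by nlinarith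
          have h8 : (t / (4 * Ht)) * Ht = t/4 := by field_simp
          linarith
        have hle : sSup T ≤ R₁ - ε := by
          refine csSup_le ⟨r₁, hr₁⟩ fun r hr => ?_
          by_contra hcon
          push_neg at hcon
          exact hnotin (hTdown r hr _ (by linarith) (by linarith))
        linarith
      set δ : ℝ := min ((R₁ - sSup T)/2) (t/(8*Ht)) with hδdef
      have hδ : 0 < δ := lt_min (by linarith) (by positivity)
      have hδle1 : δ ≤ (R₁ - sSup T)/2 := min_le_left _ _
      have hδle2 : δ ≤ t/(8*Ht) := min_le_right _ _
      have hrR : sSup T + δ ≤ R₁ := by linarith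
      have hr0 : 0 < sSup T + δ := by linarith
      have hgr_lt : g (sSup T + δ) < ENNReal.ofReal (t/2) := by
        by_contra hcon
        push_neg at hcon
        have hrT : sSup T + δ ∈ T := ⟨⟨hr0, hrR⟩, hcon⟩
        have := le_csSup hbddT hrT
        linarith
      obtain ⟨r', hr'T, hr'gt⟩ :=
        exists_lt_of_lt_csSup ⟨r₁, hr₁⟩ (show sSup T - δ < sSup T by linarith)
      have hr''T : max r' r₁ ∈ T := by
        rcases le_total r' r₁ with hc | hc
        · rw [max_eq_right hc]; exact hr₁
        · rw [max_eq_left hc]; exact hr'T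
      have hr''gt : sSup T - δ < max r' r₁ := lt_of_lt_of_le hr'gt (le_max_left _ _)
      have hr''le : max r' r₁ ≤ sSup T := le_csSup hbddT hr''T
      have hstep : g (max r' r₁) ≤ g (sSup T + δ)
          + ENNReal.ofReal (((sSup T + δ) - max r' r₁) * Ht) :=
        hkey _ _ (le_max_right _ _) (by linarith) hrR
      have hlow2 : ENNReal.ofReal (t/4) ≤ g (sSup T + δ) := by
        have h1 : ENNReal.ofReal (t/2) ≤ g (sSup T + δ)
            + ENNReal.ofReal (((sSup T + δ) - max r' r₁) * Ht) :=
          le_trans hr''T.2 hstep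
        have h2 : ((sSup T + δ) - max r' r₁) * Ht ≤ t/4 := by
          have hr2δ : (sSup T + δ) - max r' r₁ ≤ 2*δ := by linarith
          have h9 : ((sSup T + δ) - max r' r₁) * Ht ≤ (2*δ) * Ht := by nlinarith
          have h10 : (2*δ) * Ht ≤ (2*(t/(8*Ht))) * Ht := by nlinarith
          have h8 : (2*(t/(8*Ht))) * Ht = t/4 := by field_simp; ring
          exact le_of_le_of_eq (le_trans h9 h10) h8
        have h3 : ENNReal.ofReal (t/2) ≤ g (sSup T + δ) + ENNReal.ofReal (t/4) :=
          le_trans h1 (add_le_add_right (ENNReal.ofReal_le_ofReal h2) _)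
        have h4 : ENNReal.ofReal (t/2) - ENNReal.ofReal (t/4) ≤ g (sSup T + δ) :=
          tsub_le_iff_right.2 h3
        rwa [← ENNReal.ofReal_sub _ (by linarith), show t/2 - t/4 = t/4 by ring] at h4
      have hAsub : {x | x ∈ ball x₀ R₁ ∧ ENNReal.ofReal t < g (dist x x₀)}
          ⊆ ball x₀ (sSup T + δ) ∪ {x₀} := by
        intro x hx
        rcases eq_or_ne x x₀ with hxe | hxe
        · exact Or.inr hxe
        · refine Or.inl ?_
          rw [mem_ball]
          by_contra hcon
          push_neg at hcon
          have hle : g (dist x x₀) ≤ g (sSup T + δ) := hg_anti hcon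
          have h11 : ENNReal.ofReal t < ENNReal.ofReal (t/2) :=
            lt_of_le_of_lt (le_trans hx.2.le hle) hgr_lt
          have := (ENNReal.ofReal_lt_ofReal_iff (by linarith)).1 h11
          linarith
      have hmA : μ {x | x ∈ ball x₀ R₁ ∧ ENNReal.ofReal t < g (dist x x₀)}
          ≤ μ (ball x₀ (sSup T + δ)) := by
        refine le_trans (measure_mono hAsub) (le_trans (measure_union_le _ _) ?_)
        rw [hx₀, add_zero]
      have hA2 := lemA (sSup T + δ) ⟨hr0, hrR⟩
      have h5 : (μ (ball x₀ (sSup T + δ))) ^ (1/κ) * ENNReal.ofReal (t/4) ≤ CA :=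
        le_trans (mul_le_mul_right hlow2 _) hA2
      have h6 : (μ (ball x₀ (sSup T + δ))) ^ (1/κ) ≤ CA / ENNReal.ofReal (t/4) :=
        (ENNReal.le_div_iff_mul_le (Or.inl (ENNReal.ofReal_pos.2 (by linarith)).ne')
          (Or.inl ENNReal.ofReal_ne_top)).2 h5
      have h7 : μ (ball x₀ (sSup T + δ)) ≤ (CA / ENNReal.ofReal (t/4)) ^ κ := by
        have h8 := ENNReal.rpow_le_rpow h6 hκ.le
        rwa [← ENNReal.rpow_mul, one_div_mul_cancel hκ.ne', ENNReal.rpow_one] at h8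
      calc μ {x | x ∈ ball x₀ R₁ ∧ ENNReal.ofReal t < g (dist x x₀)}
          ≤ μ (ball x₀ (sSup T + δ)) := hmA
        _ ≤ (CA / ENNReal.ofReal (t/4)) ^ κ := h7
        _ = CA ^ κ * (ENNReal.ofReal (t/4)) ^ (-κ) := by
            rw [ENNReal.div_rpow_of_nonneg _ _ hκ.le, div_eq_mul_inv, ENNReal.rpow_neg]
  -- conclude via the layer cake formula
  have hνx₀ : (μ.restrict (ball x₀ R₁)) {x₀} = 0 := by
    rw [Measure.restrict_apply' measurableSet_ball]
    exact le_antisymm (le_trans (measure_mono Set.inter_subset_left) (le_of_eq hx₀))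
      zero_le
  have hae : ∀ᵐ x ∂(μ.restrict (ball x₀ R₁)), x ≠ x₀ := by
    rw [ae_iff]
    convert hνx₀ using 2
    ext y; simp
  have hgmeas : Measurable g := hg_anti.measurable
  have hfmeas : Measurable (fun x => (g (dist x x₀)).toReal) :=
    ENNReal.measurable_toReal.comp (hgmeas.comp (continuous_id.dist continuous_const).measurable)
  have hcongr : (∫⁻ x in ball x₀ R₁, (g (dist x x₀)) ^ τ ∂μ)
      = ∫⁻ x, ENNReal.ofReal ((g (dist x x₀)).toReal ^ τ) ∂(μ.restrict (ball x₀ R₁)) := by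
    refine lintegral_congr_ae ?_
    filter_upwards [hae] with x hx
    have hd : 0 < dist x x₀ := dist_pos.2 hx
    rw [← ENNReal.ofReal_rpow_of_nonneg ENNReal.toReal_nonneg hτ.le,
      ENNReal.ofReal_toReal (hgfin _ hd)]
  rw [hcongr, lintegral_rpow_eq_lintegral_meas_lt_mul (μ.restrict (ball x₀ R₁))
    (Filter.Eventually.of_forall fun x => ENNReal.toReal_nonneg) hfmeas.aemeasurable hτ]
  have hIoi : Set.Ioi (0:ℝ) = Set.Ioc (0:ℝ) 1 ∪ Set.Ioi 1 :=
    (Set.Ioc_union_Ioi_eq_Ioi zero_le_one).symm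
  rw [hIoi, lintegral_union measurableSet_Ioi (Set.Ioc_disjoint_Ioi le_rfl)]
  have hsetbound : ∀ t : ℝ, 0 < t →
      (μ.restrict (ball x₀ R₁)) {a | t < (g (dist a x₀)).toReal}
        ≤ CA ^ κ * (ENNReal.ofReal (t/4)) ^ (-κ) := by
    intro t ht
    rw [Measure.restrict_apply' measurableSet_ball]
    refine le_trans (measure_mono ?_) (hdist t ht)
    intro x hx
    refine ⟨hx.2, ?_⟩
    rcases eq_or_ne (g (dist x x₀)) ⊤ with hT | hT
    · rw [hT]; exact ENNReal.ofReal_lt_top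
    · have := hx.1
      calc ENNReal.ofReal t < ENNReal.ofReal (g (dist x x₀)).toReal :=
            (ENNReal.ofReal_lt_ofReal_iff_of_nonneg ht.le).2 this
        _ = g (dist x x₀) := ENNReal.ofReal_toReal hT
  have hP1 : (∫⁻ t in Set.Ioc (0:ℝ) 1,
        (μ.restrict (ball x₀ R₁)) {a | t < (g (dist a x₀)).toReal}
          * ENNReal.ofReal (t ^ (τ - 1))) < ⊤ := by
    have hb : ∀ t ∈ Set.Ioc (0:ℝ) 1,
        (μ.restrict (ball x₀ R₁)) {a | t < (g (dist a x₀)).toReal}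
            * ENNReal.ofReal (t ^ (τ - 1))
          ≤ μ (ball x₀ R₁) * ENNReal.ofReal (t ^ (τ - 1)) := by
      intro t _
      refine mul_le_mul_left ?_ _
      refine le_trans (measure_mono (Set.subset_univ _)) ?_
      rw [Measure.restrict_apply_univ]
    calc (∫⁻ t in Set.Ioc (0:ℝ) 1,
          (μ.restrict (ball x₀ R₁)) {a | t < (g (dist a x₀)).toReal}
            * ENNReal.ofReal (t ^ (τ - 1)))
        ≤ ∫⁻ t in Set.Ioc (0:ℝ) 1, μ (ball x₀ R₁) * ENNReal.ofReal (t ^ (τ - 1)) :=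
          setLIntegral_mono' measurableSet_Ioc hb
      _ = μ (ball x₀ R₁) * ∫⁻ t in Set.Ioc (0:ℝ) 1, ENNReal.ofReal (t ^ (τ - 1)) :=
          lintegral_const_mul' _ _ (hfin R₁).ne
      _ < ⊤ := ENNReal.mul_lt_top (hfin R₁) (lint_Ioc_rpow_fin (by linarith))
  have hP2 : (∫⁻ t in Set.Ioi (1:ℝ),
        (μ.restrict (ball x₀ R₁)) {a | t < (g (dist a x₀)).toReal}
          * ENNReal.ofReal (t ^ (τ - 1))) < ⊤ := by
    have hb : ∀ t ∈ Set.Ioi (1:ℝ),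
        (μ.restrict (ball x₀ R₁)) {a | t < (g (dist a x₀)).toReal}
            * ENNReal.ofReal (t ^ (τ - 1))
          ≤ (CA ^ κ * ENNReal.ofReal ((4:ℝ) ^ κ)) * ENNReal.ofReal (t ^ (τ - 1 - κ)) := by
      intro t ht'
      have ht1 : (1:ℝ) < t := ht'
      have ht0 : (0:ℝ) < t := by linarith
      calc (μ.restrict (ball x₀ R₁)) {a | t < (g (dist a x₀)).toReal}
            * ENNReal.ofReal (t ^ (τ - 1))
          ≤ (CA ^ κ * (ENNReal.ofReal (t/4)) ^ (-κ)) * ENNReal.ofReal (t ^ (τ - 1)) :=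
            mul_le_mul_left (hsetbound t ht0) _
        _ = (CA ^ κ * ENNReal.ofReal ((4:ℝ) ^ κ)) * ENNReal.ofReal (t ^ (τ - 1 - κ)) := by
            have hreal : (t/4) ^ (-κ) * t ^ (τ - 1) = (4:ℝ) ^ κ * t ^ (τ - 1 - κ) := by
              rw [Real.div_rpow ht0.le (by norm_num : (0:ℝ) ≤ 4),
                Real.rpow_neg ht0.le, Real.rpow_neg (by norm_num : (0:ℝ) ≤ 4),
                show τ - 1 - κ = -κ + (τ - 1) by ring, Real.rpow_add ht0]
              rw [Real.rpow_neg ht0.le]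
              field_simp
            rw [ENNReal.ofReal_rpow_of_pos (by linarith : (0:ℝ) < t/4), mul_assoc,
              ← ENNReal.ofReal_mul (by positivity), hreal,
              ENNReal.ofReal_mul (by positivity), ← mul_assoc]
    calc (∫⁻ t in Set.Ioi (1:ℝ),
          (μ.restrict (ball x₀ R₁)) {a | t < (g (dist a x₀)).toReal}
            * ENNReal.ofReal (t ^ (τ - 1)))
        ≤ ∫⁻ t in Set.Ioi (1:ℝ),
            (CA ^ κ * ENNReal.ofReal ((4:ℝ) ^ κ)) * ENNReal.ofReal (t ^ (τ - 1 - κ)) :=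
          setLIntegral_mono' measurableSet_Ioi hb
      _ = (CA ^ κ * ENNReal.ofReal ((4:ℝ) ^ κ)) *
            ∫⁻ t in Set.Ioi (1:ℝ), ENNReal.ofReal (t ^ (τ - 1 - κ)) :=
          lintegral_const_mul' _ _
            (ENNReal.mul_lt_top
              (ENNReal.rpow_lt_top_of_nonneg hκ.le hCAfin.ne) ENNReal.ofReal_lt_top).ne
      _ < ⊤ := ENNReal.mul_lt_top
          (ENNReal.mul_lt_top (ENNReal.rpow_lt_top_of_nonneg hκ.le hCAfin.ne)
            ENNReal.ofReal_lt_top)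
          (lint_Ioi_rpow_fin (by linarith))
  exact ENNReal.mul_lt_top ENNReal.ofReal_lt_top (ENNReal.add_lt_top.2 ⟨hP1, hP2⟩)

/-- **Measure-theoretic core of Theorem 6.1 (subcritical integrability).** If
`1 < p < s̄`, `0 < τ < s̄(p−1)/(s̄−p)`, `0 < R₁ ≤ 1` and
`C₁ ρ^{s̄} ≤ μ(B_ρ) ≤ C₂ ρ^{ℓ}` for `0 < ρ ≤ R₁`, then
`x ↦ (∫_{d(x,x₀)}^{R₁} (ρ/μ(B_ρ))^{1/(p−1)} dρ)^τ`
is `μ`-integrable over `B(x₀,R₁)`. -/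
theorem green_integrable_below_critical_exponent
    {X : Type*} [MetricSpace X] [MeasurableSpace X] [BorelSpace X]
    (μ : Measure X) (x₀ : X)
    (hpos : ∀ r : ℝ, 0 < r → 0 < μ (ball x₀ r))
    (hfin : ∀ r : ℝ, μ (ball x₀ r) < ⊤)
    (p s τ : ℝ) (hp : 1 < p) (hps : p < s)
    (hτ : 0 < τ) (hτ' : τ < s * (p - 1) / (s - p))
    (R₁ : ℝ) (hR₁ : 0 < R₁) (hR₁' : R₁ ≤ 1)
    (C₁ C₂ ℓ : ℝ) (hC₁ : 0 < C₁) (hC₂ : 0 < C₂) (hℓ : 0 < ℓ)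
    (hlow : ∀ ρ : ℝ, 0 < ρ → ρ ≤ R₁ → ENNReal.ofReal (C₁ * ρ ^ s) ≤ μ (ball x₀ ρ))
    (hup : ∀ ρ : ℝ, 0 < ρ → ρ ≤ R₁ → μ (ball x₀ ρ) ≤ ENNReal.ofReal (C₂ * ρ ^ ℓ)) :
    (∫⁻ x in ball x₀ R₁,
        (∫⁻ ρ in Set.Ioc (dist x x₀) R₁,
          (ENNReal.ofReal ρ / μ (ball x₀ ρ)) ^ (1 / (p - 1))) ^ τ ∂μ) < ⊤ := by
  have hp1 : (0:ℝ) < p - 1 := by linarith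
  have hsp : (0:ℝ) < s - p := by linarith
  have hs0 : (0:ℝ) < s := by linarith
  have hq : 0 < 1 / (p - 1) := by positivity
  have hKpos : 0 < s * (p - 1) / (s - p) := by positivity
  set κ : ℝ := (τ + s * (p - 1) / (s - p)) / 2 with hκdef
  have hτκ : τ < κ := by rw [hκdef]; linarith
  have hκK : κ < s * (p - 1) / (s - p) := by rw [hκdef]; linarith
  have hκ : 0 < κ := by linarith
  have hqse : -1 < 1 / (p - 1) + s * (1 / κ - 1 / (p - 1)) := by
    have h1 : s / (s * (p - 1) / (s - p)) = (s - p) / (p - 1) := by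
      field_simp
    have h2 : s / (s * (p - 1) / (s - p)) < s / κ :=
      div_lt_div_of_pos_left hs0 hκ hκK
    rw [h1] at h2
    have h3 : s * (1 / κ) = s / κ := by ring
    have h4 : 1 / (p - 1) + s * (1 / κ - 1 / (p - 1)) = s / κ + (1 - s) / (p - 1) := by
      field_simp
      ring
    have h5 : (s - p) / (p - 1) + (1 - s) / (p - 1) = -1 := by
      field_simp
      ring
    rw [h4]
    linarith
  have hx₀ : μ {x₀} = 0 := by
    by_contra hne
    have hfin' : μ {x₀} < ⊤ :=
      lt_of_le_of_lt (measure_mono (Set.singleton_subset_iff.2 (mem_ball_self hR₁)))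
        (hfin R₁)
    have hc : 0 < (μ {x₀}).toReal :=
      ENNReal.toReal_pos hne hfin'.ne
    set c : ℝ := (μ {x₀}).toReal with hcdef
    set ρ0 : ℝ := min R₁ ((c / (2 * C₂)) ^ (1 / ℓ)) with hρ0def
    have hρ0 : 0 < ρ0 := lt_min hR₁ (Real.rpow_pos_of_pos (by positivity) _)
    have h1 : μ {x₀} ≤ ENNReal.ofReal (C₂ * ρ0 ^ ℓ) :=
      le_trans (measure_mono (Set.singleton_subset_iff.2 (mem_ball_self hρ0)))
        (hup ρ0 hρ0 (min_le_left _ _))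
    have h2 : C₂ * ρ0 ^ ℓ ≤ c / 2 := by
      have h3 : ρ0 ^ ℓ ≤ ((c / (2 * C₂)) ^ (1 / ℓ)) ^ ℓ :=
        Real.rpow_le_rpow hρ0.le (min_le_right _ _) hℓ.le
      have h4 : ((c / (2 * C₂)) ^ (1 / ℓ)) ^ ℓ = c / (2 * C₂) := by
        rw [← Real.rpow_mul (by positivity), one_div_mul_cancel hℓ.ne', Real.rpow_one]
      rw [h4] at h3
      calc C₂ * ρ0 ^ ℓ ≤ C₂ * (c / (2 * C₂)) := by nlinarith
        _ = c / 2 := by field_simp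
    have h5 : μ {x₀} ≤ ENNReal.ofReal (c / 2) :=
      le_trans h1 (ENNReal.ofReal_le_ofReal h2)
    have h6 : ENNReal.ofReal (c / 2) < ENNReal.ofReal c := by
      rw [ENNReal.ofReal_lt_ofReal_iff hc]
      linarith
    rw [hcdef, ENNReal.ofReal_toReal hfin'.ne] at h6
    exact absurd (lt_of_le_of_lt h5 h6) (lt_irrefl _)
  exact main_aux μ x₀ hpos hfin s τ (1 / (p - 1)) κ R₁ C₁ hq hκ hτ hτκ hqse hR₁ hR₁' hC₁
    hlow hx₀ _ (fun r => rfl)
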